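/- Assume f satisfies hypotheses (H1)–(H3) with b = 1, and let x be a solution of x'(t) = f(t,x_t) with m = liminf_{t→∞} x(t) < 0 < M = limsup_{t→∞} x(t), where r(x) = ax/(1+x). Then: (i) if a ∈ [−3/2, 0), then m > −1 and r(−r(M)/2) > −1; (ii) if a ∈ [−3/2, −5/4], then m > ν, where ν = 2A'(0)/A''(0) with A'(0) = a + 1/2 and A''(0) = −(2a + 1/3). -/

import Mathlib

open Set Filter MeasureTheory Topology

/-- The Yorke functional 𝓜(φ) = max{0, max_{s ∈ [-1,0]} φ(s)}. -/
noncomputable def yorkeM (φ : ℝ → ℝ) : ℝ := max 0 (sSup (φ '' Icc (-1 : ℝ) 0))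

/-- Membership in the phase space C = C([-1,0], ℝ): we work with functions
ℝ → ℝ whose restriction to [-1,0] is continuous (only values on [-1,0] matter). -/
def InC (φ : ℝ → ℝ) : Prop := ContinuousOn φ (Icc (-1 : ℝ) 0)

/-- The segment x_t(s) = x(t+s), s ∈ [-1,0]. -/
def seg (x : ℝ → ℝ) (t : ℝ) : ℝ → ℝ := fun s => x (t + s)

/-- Carathéodory condition: measurable in t for fixed φ, continuous in φ
(w.r.t. uniform distance on [-1,0]) for fixed t, locally dominated by an
integrable function. -/
def Caratheodory (f : ℝ → (ℝ → ℝ) → ℝ) : Prop :=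
  (∀ φ, InC φ → Measurable fun t => f t φ) ∧
  (∀ t : ℝ, ∀ φ, InC φ → ∀ ε : ℝ, 0 < ε → ∃ δ : ℝ, 0 < δ ∧ ∀ ψ, InC ψ →
      (∀ s ∈ Icc (-1 : ℝ) 0, |ψ s - φ s| ≤ δ) → |f t ψ - f t φ| ≤ ε) ∧
  (∀ t : ℝ, ∀ φ, InC φ → ∃ δ : ℝ, 0 < δ ∧ ∃ m : ℝ → ℝ,
      IntegrableOn m (Icc (t - δ) (t + δ)) ∧
      ∀ s ∈ Icc (t - δ) (t + δ), ∀ ψ, InC ψ →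
        (∀ u ∈ Icc (-1 : ℝ) 0, |ψ u - φ u| ≤ δ) → |f s ψ| ≤ m s)

/-- (H1): f is Carathéodory and for every q there is ϑ(q) ≥ 0 dominating f(t,φ)
a.e. in t whenever φ ≥ q on [-1,0]. -/
def HypH1 (f : ℝ → (ℝ → ℝ) → ℝ) (θ : ℝ → ℝ) : Prop :=
  Caratheodory f ∧
  ∀ q : ℝ, 0 ≤ θ q ∧
    ∀ φ, InC φ → (∀ s ∈ Icc (-1 : ℝ) 0, q ≤ φ s) →
      ∀ᵐ t : ℝ ∂volume, f t φ ≤ θ q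

/-- (H2), the generalized Yorke condition with r(x) = ax/(1+bx):
r(𝓜(φ)) ≤ f(t,φ) for all φ, and f(t,φ) ≤ r(-𝓜(-φ)) for all φ with
min φ > -1/b (which is automatic when b = 0, since then b·φ(s) > -1 always). -/
def HypH2 (f : ℝ → (ℝ → ℝ) → ℝ) (a b : ℝ) : Prop :=
  (∀ t : ℝ, ∀ φ, InC φ → a * yorkeM φ / (1 + b * yorkeM φ) ≤ f t φ) ∧
  (∀ t : ℝ, ∀ φ, InC φ → (∀ s ∈ Icc (-1 : ℝ) 0, -1 < b * φ s) →
      f t φ ≤ a * (-yorkeM fun s => -φ s) / (1 + b * (-yorkeM fun s => -φ s)))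

/-- (H3): ∫₀^∞ f(s, p_s) ds diverges for every continuous p having a nonzero
limit at infinity. -/
def HypH3 (f : ℝ → (ℝ → ℝ) → ℝ) : Prop :=
  ∀ p : ℝ → ℝ, ContinuousOn p (Ici (-1 : ℝ)) → ∀ L : ℝ, L ≠ 0 →
    Tendsto p atTop (𝓝 L) →
    ¬∃ I : ℝ, Tendsto (fun T => ∫ s in (0 : ℝ)..T, f s (seg p s)) atTop (𝓝 I)

/-- A solution of x'(t) = f(t, x_t) on [α-1, ω) (with ω ∈ (α, +∞]) with initial
time α: continuous on [α-1, ω) and satisfying the equivalent integral equation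
(absolute continuity plus a.e. differential equation) on [α, ω). -/
def IsSolOn (f : ℝ → (ℝ → ℝ) → ℝ) (α : ℝ) (ω : EReal) (x : ℝ → ℝ) : Prop :=
  (α : EReal) < ω ∧
  ContinuousOn x {t : ℝ | α - 1 ≤ t ∧ (t : EReal) < ω} ∧
  ∀ t : ℝ, α ≤ t → (t : EReal) < ω →
    IntervalIntegrable (fun s => f s (seg x s)) volume α t ∧
    x t = x α + ∫ s in α..t, f s (seg x s)

/-- A solution on its maximal interval of existence [α-1, ω): it admits no
extension to any strictly larger interval [α-1, ω'). -/
def IsMaximalSolOn (f : ℝ → (ℝ → ℝ) → ℝ) (α : ℝ) (ω : EReal) (x : ℝ → ℝ) : Prop :=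
  IsSolOn f α ω x ∧
  ∀ ω' : EReal, ω < ω' → ∀ y : ℝ → ℝ, IsSolOn f α ω' y →
    ¬∀ t : ℝ, α - 1 ≤ t → (t : EReal) < ω → y t = x t

/-- A (global) solution of x'(t) = f(t, x_t) on [α-1, +∞). -/
def IsGlobalSol (f : ℝ → (ℝ → ℝ) → ℝ) (α : ℝ) (x : ℝ → ℝ) : Prop :=
  ContinuousOn x (Ici (α - 1)) ∧
  ∀ t : ℝ, α ≤ t →
    IntervalIntegrable (fun s => f s (seg x s)) volume α t ∧
    x t = x α + ∫ s in α..t, f s (seg x s)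

lemma yorkeM_nonneg (φ : ℝ → ℝ) : 0 ≤ yorkeM φ := le_max_left _ _

lemma yorkeM_le {φ : ℝ → ℝ} {c : ℝ} (hc : 0 ≤ c) (h : ∀ u ∈ Icc (-1:ℝ) 0, φ u ≤ c) :
    yorkeM φ ≤ c :=
  max_le hc (Real.sSup_le (fun v hv => by obtain ⟨u, hu, rfl⟩ := hv; exact h u hu) hc)

lemma rr_anti {a y c : ℝ} (ha : a < 0) (hy : 0 ≤ y) (hyc : y ≤ c) :
    a * c / (1 + c) ≤ a * y / (1 + y) := by
  have h1 : (0:ℝ) < 1 + y := by linarith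
  have h2 : (0:ℝ) < 1 + c := by linarith
  rw [div_le_div_iff₀ h2 h1]
  nlinarith

lemma seg_inC {α : ℝ} {x : ℝ → ℝ} (hx : ContinuousOn x (Ici (α-1))) {s : ℝ} (hs : α ≤ s) :
    InC (seg x s) := by
  show ContinuousOn (fun u : ℝ => x (s + u)) (Icc (-1:ℝ) 0)
  apply hx.comp ((continuous_const.add continuous_id).continuousOn)
  intro u hu
  simp only [mem_Ici, id_eq, Pi.add_apply]
  have := hu.1
  simp only [mem_Icc] at hu
  linarith [hu.1]

lemma f_lower {f : ℝ → (ℝ → ℝ) → ℝ} {a : ℝ} (ha : a < 0) (h2 : HypH2 f a 1)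
    {s c : ℝ} (hc : 0 ≤ c) {φ : ℝ → ℝ} (hφ : InC φ)
    (hb : ∀ u ∈ Icc (-1:ℝ) 0, φ u ≤ c) : a * c / (1 + c) ≤ f s φ := by
  have h := h2.1 s φ hφ
  rw [one_mul] at h
  exact le_trans (rr_anti ha (yorkeM_nonneg φ) (yorkeM_le hc hb)) h

lemma sol_step {f : ℝ → (ℝ → ℝ) → ℝ} {α : ℝ} {x : ℝ → ℝ} (hx : IsGlobalSol f α x)
    {s t : ℝ} (hs : α ≤ s) (hst : s ≤ t) :
    IntervalIntegrable (fun u => f u (seg x u)) volume s t ∧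
      x t = x s + ∫ u in s..t, f u (seg x u) := by
  obtain ⟨hIt, hxt⟩ := hx.2 t (hs.trans hst)
  obtain ⟨hIs, hxs⟩ := hx.2 s hs
  have hsub : uIcc s t ⊆ uIcc α t := by
    rw [uIcc_of_le hst, uIcc_of_le (hs.trans hst)]
    exact Icc_subset_Icc hs le_rfl
  have hI : IntervalIntegrable (fun u => f u (seg x u)) volume s t := hIt.mono_set hsub
  refine ⟨hI, ?_⟩
  have h3 := intervalIntegral.integral_interval_sub_left hIt hIs
  linarith [h3, hxt, hxs]

lemma quad_min {a y K : ℝ} (ha : a < 0) (hy : 0 ≤ y) (hyK : y ≤ K) :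
    a * y - a * y^2 / (1 + K) ≤ a * y / (1 + y) := by
  have h1 : (0:ℝ) < 1 + y := by linarith
  have h2 : (0:ℝ) < 1 + K := by linarith
  have e : a * y - a * y^2 / (1 + K) = (a*y*(1+K) - a*y^2) / (1+K) := by
    field_simp
  rw [e, div_le_div_iff₀ h2 h1]
  nlinarith [mul_nonneg (mul_nonneg (neg_nonneg.2 ha.le) (sq_nonneg y)) (sub_nonneg.2 hyK)]

lemma beta_mono {a K : ℝ} (ha : a < 0) (hK : 0 < K) (hKa : K ≤ -a) :
    -a^2*(3-a)/(6*(1-a)) ≤ a*K/2 - a*K^2/(3*(1+K)) := by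
  have h1 : (0:ℝ) < 1 + K := by linarith
  have h2 : (0:ℝ) < 1 - a := by linarith
  have e : a*K/2 - a*K^2/(3*(1+K)) = a*K*(3+K)/(6*(1+K)) := by
    field_simp
    ring
  rw [e, div_le_div_iff₀ (by linarith) (by linarith)]
  have hin : (0:ℝ) ≤ 3 - a + K - a*K := by nlinarith [mul_pos (neg_pos.2 ha) hK]
  nlinarith [mul_nonneg (mul_nonneg (neg_nonneg.2 ha.le) (sub_nonneg.2 hKa)) hin]

lemma Gt_bound {a K w : ℝ} (ha : a < 0) (hK : 0 < K) (hw0 : 0 ≤ w) (hw1 : w ≤ 1) :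
    a*K/2 - a*K^2/(3*(1+K)) ≤
      (-(a*K)*w^2/2 + (a*K^2/(1+K))*w^3/3) - (-(a*K)/2 + (a*K^2/(1+K))/3) := by
  have hK1 : (0:ℝ) < 1 + K := by linarith
  have hdiff : (-(a*K)*w^2/2 + (a*K^2/(1+K))*w^3/3) - (-(a*K)/2 + (a*K^2/(1+K))/3)
      - (a * K / 2 - a * K^2 / (3 * (1 + K)))
      = (-(a*K)*w^2*(3*(1+K)) + 2*a*K^2*w^3) / (6*(1+K)) := by
    field_simp
    ring
  have h5 : (0:ℝ) ≤ 3*(1+K) - 2*K*w := by nlinarith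
  have hnum : 0 ≤ -(a*K)*w^2*(3*(1+K)) + 2*a*K^2*w^3 := by
    nlinarith [mul_nonneg (mul_nonneg (mul_nonneg (neg_nonneg.2 ha.le) hK.le)
      (sq_nonneg w)) h5]
  have hd := div_nonneg hnum (by linarith : (0:ℝ) ≤ 6*(1+K))
  linarith [hdiff, hd]

set_option maxHeartbeats 1000000 in
lemma key_estimate {f : ℝ → (ℝ → ℝ) → ℝ} {a : ℝ} (ha : a < 0) (h2 : HypH2 f a 1)
    {α : ℝ} {x : ℝ → ℝ} (hx : IsGlobalSol f α x)
    {M' T₀ t₁ t₂ K : ℝ} (hM' : 0 < M') (hKdef : K = -(a * M' / (1 + M')))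
    (hT₀ : α + 1 ≤ T₀) (hbd : ∀ t, T₀ ≤ t → x t ≤ M')
    (ht₁ : T₀ + 2 ≤ t₁) (ht₁₂ : t₁ ≤ t₂) (hx₁ : 0 < x t₁) (hx₂ : x t₂ < 0) :
    a * K / 2 - a * K^2 / (3 * (1 + K)) ≤ x t₂ := by
  have hM'1 : (0:ℝ) < 1 + M' := by linarith
  have hK0 : 0 < K := by
    have : a * M' / (1 + M') < 0 :=
      div_neg_of_neg_of_pos (mul_neg_of_neg_of_pos ha hM') hM'1
    rw [hKdef]; linarith
  have hK1 : (0:ℝ) < 1 + K := by linarith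
  have hcont := hx.1
  have hαt₁ : α ≤ t₁ := by linarith
  -- the last "zero" before t₂
  set S : Set ℝ := Icc t₁ t₂ ∩ x ⁻¹' (Ici 0) with hS
  have hSsub : Icc t₁ t₂ ⊆ Ici (α - 1) := fun u hu => by
    simp only [mem_Ici]; linarith [hu.1]
  have hSclosed : IsClosed S :=
    (hcont.mono hSsub).preimage_isClosed_of_isClosed isClosed_Icc isClosed_Ici
  have hSne : t₁ ∈ S := ⟨⟨le_rfl, ht₁₂⟩, hx₁.le⟩
  have hSbdd : BddAbove S := ⟨t₂, fun s hs => hs.1.2⟩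
  set z := sSup S with hz
  have hzS : z ∈ S := hSclosed.csSup_mem ⟨t₁, hSne⟩ hSbdd
  have hzt₁ : t₁ ≤ z := le_csSup hSbdd hSne
  have hzt₂ : z ≤ t₂ := hzS.1.2
  have hαz : α ≤ z := le_trans hαt₁ hzt₁
  have hneg : ∀ u, z < u → u ≤ t₂ → x u < 0 := by
    intro u h1 h2u
    by_contra hcon
    push_neg at hcon
    exact absurd (le_csSup hSbdd ⟨⟨le_trans hzt₁ h1.le, h2u⟩, hcon⟩) (not_le.2 h1)
  have hzlt : z < t₂ := by
    rcases eq_or_lt_of_le hzt₂ with h | h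
    · exfalso; rw [h] at hzS; exact absurd hzS.2 (by simpa using hx₂)
    · exact h
  have hxz : x z = 0 := by
    by_contra h
    have hpos : 0 < x z := lt_of_le_of_ne hzS.2 (Ne.symm h)
    have hcw : ContinuousWithinAt x (Ioc z t₂) z :=
      (hcont.continuousWithinAt (by simp only [mem_Ici]; linarith)).mono
        (fun u hu => by simp only [mem_Ici]; linarith [hu.1.le])
    have hev : ∀ᶠ u in 𝓝[Ioc z t₂] z, 0 < x u := hcw (Ioi_mem_nhds hpos)
    have hmemcl : z ∈ closure (Ioc z t₂) := by
      rw [closure_Ioc hzlt.ne]; exact ⟨le_rfl, hzlt.le⟩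
    have hne : (𝓝[Ioc z t₂] z).NeBot := mem_closure_iff_nhdsWithin_neBot.1 hmemcl
    obtain ⟨u, hu1, hu2⟩ := (hev.and eventually_mem_nhdsWithin).exists
    exact absurd (hneg u hu2.1 hu2.2) (not_lt.2 hu1.le)
  -- Estimate 1: backward bound before the zero
  have hE1 : ∀ τ ∈ Icc (z-1) z, x τ ≤ K * (z - τ) := by
    intro τ hτ
    have hατ : α ≤ τ := by linarith [hτ.1, hzt₁]
    obtain ⟨hI, heq⟩ := sol_step hx hατ hτ.2
    have hmono : ∫ u in τ..z, (a * M' / (1 + M')) ≤ ∫ u in τ..z, f u (seg x u) := by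
      apply intervalIntegral.integral_mono_on hτ.2 intervalIntegrable_const hI
      intro u hu
      apply f_lower ha h2 hM'.le (seg_inC hcont (by linarith [hu.1] : α ≤ u))
      intro v hv
      simp only [mem_Icc] at hv
      exact hbd _ (by linarith [hv.1, hu.1, hτ.1])
    have hconst : ∫ u in τ..z, (a * M' / (1 + M')) = (z - τ) * (a * M' / (1+M')) := by
      rw [intervalIntegral.integral_const]; simp [smul_eq_mul]
    rw [hxz] at heq
    rw [hKdef]
    nlinarith [hmono, hconst, heq]
  -- forward estimate over the unit interval after the zero
  set t : ℝ := min t₂ (z+1) with ht_def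
  have hzt : z ≤ t := le_min hzt₂ (by linarith)
  have htle : t ≤ z + 1 := min_le_right _ _
  have htt₂ : t ≤ t₂ := min_le_left _ _
  set q : ℝ := a * K^2 / (1+K) with hq
  set g : ℝ → ℝ := fun s => a*K*(1+z-s) - q*(1+z-s)^2 with hg
  set G : ℝ → ℝ := fun s => -(a*K)*(1+z-s)^2/2 + q*(1+z-s)^3/3 with hG
  have hGderiv : ∀ s ∈ uIcc z t, HasDerivAt G (g s) s := by
    intro s _
    have h1 : HasDerivAt (fun u : ℝ => 1+z-u) (-1) s := by
      simpa using (hasDerivAt_id s).const_sub (1+z)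
    have h2 : HasDerivAt (fun u : ℝ => (1+z-u)^2) (2*(1+z-s)*(-1)) s := by
      simpa using h1.fun_pow 2
    have h3 : HasDerivAt (fun u : ℝ => (1+z-u)^3) (3*(1+z-s)^2*(-1)) s := by
      simpa using h1.fun_pow 3
    have h4 := ((h2.const_mul (-(a*K))).div_const 2).fun_add ((h3.const_mul q).div_const 3)
    rw [hG, hg]
    refine h4.congr_deriv ?_
    ring
  have hgcont : Continuous g := by
    rw [hg]; fun_prop
  have hg_int : IntervalIntegrable g volume z t := hgcont.intervalIntegrable _ _
  have hE2 : ∀ s ∈ Icc z t, g s ≤ f s (seg x s) := by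
    intro s hs
    have hs1 : z ≤ s := hs.1
    have hs2 : s ≤ t := hs.2
    have hc0 : 0 ≤ K * (1+z-s) := mul_nonneg hK0.le (by linarith [hs2, htle])
    have hcK : K * (1+z-s) ≤ K := by nlinarith [hK0.le, hs1]
    have hfl : a * (K*(1+z-s)) / (1 + K*(1+z-s)) ≤ f s (seg x s) := by
      apply f_lower ha h2 hc0 (seg_inC hcont (by linarith : α ≤ s))
      intro v hv
      simp only [mem_Icc] at hv
      show x (s + v) ≤ K*(1+z-s)
      rcases le_or_gt (s+v) z with hle | hgt
      · have hE := hE1 (s+v) ⟨by linarith [hv.1], hle⟩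
        nlinarith [mul_nonneg hK0.le (by linarith [hv.1] : (0:ℝ) ≤ 1 + v)]
      · have := hneg (s+v) hgt (by linarith [hv.2, htt₂])
        linarith [hc0]
    refine le_trans ?_ hfl
    have e : g s = a*(K*(1+z-s)) - a*(K*(1+z-s))^2/(1+K) := by
      rw [hg, hq]; ring
    rw [e]
    exact quad_min ha hc0 hcK
  obtain ⟨hIt, heqt⟩ := sol_step hx hαz hzt
  have hint1 : ∫ s in z..t, g s ≤ ∫ s in z..t, f s (seg x s) :=
    intervalIntegral.integral_mono_on hzt hg_int hIt hE2
  have hcalc : ∫ s in z..t, g s = G t - G z :=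
    intervalIntegral.integral_eq_sub_of_hasDerivAt hGderiv hg_int
  have hxt : G t - G z ≤ x t := by
    rw [heqt, hxz]
    linarith [hint1, hcalc]
  -- G t - G z ≥ the claimed lower bound, for every t in [z, z+1]
  have hβ : a * K / 2 - a * K^2 / (3 * (1 + K)) ≤ G t - G z := by
    have hw0 : 0 ≤ 1 + z - t := by linarith
    have hw1 : 1 + z - t ≤ 1 := by linarith
    have hGt : G t = -(a*K)*(1+z-t)^2/2 + (a*K^2/(1+K))*(1+z-t)^3/3 := by
      rw [hG, hq]
    have hGz : G z = -(a*K)/2 + (a*K^2/(1+K))/3 := by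
      rw [hG, hq]; ring
    rw [hGt, hGz]
    exact Gt_bound ha hK0 hw0 hw1
  clear_value S z q g G t
  rcases le_or_gt t₂ (z+1) with hcase | hcase
  · have ht_eq : t = t₂ := by rw [ht_def]; exact min_eq_left hcase
    rw [ht_eq] at hxt hβ
    linarith [hβ, hxt]
  · have ht_eq : t = z + 1 := by rw [ht_def]; exact min_eq_right (by linarith)
    obtain ⟨hI2, heq2⟩ := sol_step hx (by linarith : α ≤ t) htt₂
    have hnn : 0 ≤ ∫ u in t..t₂, f u (seg x u) := by
      apply intervalIntegral.integral_nonneg htt₂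
      intro u hu
      have h0 : a * 0 / (1 + 0) ≤ f u (seg x u) := by
        apply f_lower ha h2 le_rfl (seg_inC hcont (by linarith [hu.1] : α ≤ u))
        intro v hv
        simp only [mem_Icc] at hv
        show x (u + v) ≤ 0
        rcases eq_or_lt_of_le (show z ≤ u + v by rw [ht_eq] at hu; linarith [hu.1, hv.1]) with he | hlt
        · rw [← he, hxz]
        · exact (hneg (u+v) hlt (by linarith [hv.2, hu.2])).le
      simpa using h0
    linarith [hxt, hβ, hnn, heq2]

/-- Corollary 2.6: under (H1)-(H3) with b = 1 and a solution with
m = liminf x < 0 < M = limsup x: (i) if a ∈ [-3/2, 0) then m > -1 and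
r(-r(M)/2) > -1; (ii) if a ∈ [-3/2, -5/4] then m > ν = 2A'(0)/A''(0). -/
theorem liminf_range_bounds
    (f : ℝ → (ℝ → ℝ) → ℝ) (θ : ℝ → ℝ) (a : ℝ) (ha : a < 0)
    (h1 : HypH1 f θ) (h2 : HypH2 f a 1) (h3 : HypH3 f)
    (r : ℝ → ℝ) (hr : ∀ x : ℝ, r x = a * x / (1 + x))
    (c₁ c₂ ν : ℝ) (hc₁ : c₁ = a + 1 / 2) (hc₂ : c₂ = -(2 * a + 1 / 3))
    (hν : ν = 2 * c₁ / c₂)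
    (α : ℝ) (x : ℝ → ℝ) (hx : IsGlobalSol f α x)
    (hxbdd₁ : IsBoundedUnder (· ≤ ·) atTop x)
    (hxbdd₂ : IsBoundedUnder (· ≥ ·) atTop x)
    (m M : ℝ) (hm : m = liminf x atTop) (hM : M = limsup x atTop)
    (hm0 : m < 0) (hM0 : 0 < M) :
    (-(3 / 2) ≤ a → -1 < m ∧ -1 < r (-(r M) / 2)) ∧
    (-(3 / 2) ≤ a ∧ a ≤ -(5 / 4) → ν < m) := by
  have hβm : -a^2*(3-a)/(6*(1-a)) ≤ m := by
    have hub : ∀ᶠ t in atTop, x t < M + 1 :=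
      eventually_lt_of_limsup_lt (by rw [← hM]; linarith) hxbdd₁
    obtain ⟨T, hT⟩ := eventually_atTop.1 hub
    set T₀ := max T (α + 1) with hT₀def
    have hT₀α : α + 1 ≤ T₀ := le_max_right _ _
    have hbd : ∀ t, T₀ ≤ t → x t ≤ M + 1 := fun t ht =>
      (hT t (le_trans (le_max_left _ _) ht)).le
    have hM'pos : (0:ℝ) < M + 1 := by linarith
    have hM'1 : (0:ℝ) < 1 + (M+1) := by linarith
    set K : ℝ := -(a * (M+1) / (1 + (M+1))) with hKdef
    have hK0 : 0 < K := by
      have h0 : a * (M+1) / (1 + (M+1)) < 0 :=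
        div_neg_of_neg_of_pos (mul_neg_of_neg_of_pos ha hM'pos) hM'1
      rw [hKdef]; linarith
    have hKa : K ≤ -a := by
      have h1 : a ≤ a * (M+1) / (1 + (M+1)) := by
        rw [le_div_iff₀ hM'1]; nlinarith
      rw [hKdef]; linarith
    apply le_of_forall_pos_le_add
    intro ε hε
    have hfr1 : ∃ᶠ t in atTop, 0 < x t :=
      frequently_lt_of_lt_limsup hxbdd₂.isCoboundedUnder_le (by rw [← hM]; exact hM0)
    obtain ⟨t₁, ht₁pos, ht₁ge⟩ :=
      (hfr1.and_eventually (eventually_ge_atTop (T₀ + 2))).exists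
    have hεm : 0 < min ε (-m/2) := lt_min hε (by linarith)
    have hfr2 : ∃ᶠ t in atTop, x t < m + min ε (-m/2) :=
      frequently_lt_of_liminf_lt hxbdd₁.isCoboundedUnder_ge (by rw [← hm]; linarith)
    obtain ⟨t₂, ht₂lt, ht₂ge⟩ := (hfr2.and_eventually (eventually_ge_atTop t₁)).exists
    have hx₂ : x t₂ < 0 := by
      have := min_le_right ε (-m/2); linarith
    have hkey := key_estimate ha h2 hx hM'pos hKdef hT₀α hbd ht₁ge ht₂ge ht₁pos hx₂
    have hmon := beta_mono ha hK0 hKa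
    have hminε := min_le_left ε (-m/2)
    clear_value K T₀
    linarith
  constructor
  · intro haa
    refine ⟨?_, ?_⟩
    · have hd : (0:ℝ) < 6*(1-a) := by linarith
      have h1 : (-1:ℝ) < -a^2*(3-a)/(6*(1-a)) := by
        rw [lt_div_iff₀ hd]
        nlinarith [mul_nonneg (mul_nonneg (neg_nonneg.2 ha.le)
          (by linarith : (0:ℝ) ≤ 3/2 + a)) (by linarith : (0:ℝ) ≤ 9/2 - a)]
      linarith
    · rw [hr, hr]
      have hM1 : 0 < 1 + M := by linarith
      set u : ℝ := M / (1 + M) with hu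
      have hu0 : 0 < u := div_pos hM0 hM1
      have hu1 : u < 1 := (div_lt_one hM1).2 (by linarith)
      have hy : -(a * M / (1 + M)) / 2 = -a * u / 2 := by rw [hu]; ring
      rw [hy]
      have hy0 : 0 < -a * u / 2 := by
        have : 0 < -a := by linarith
        positivity
      have hdpos : (0:ℝ) < 1 + -a * u / 2 := by nlinarith
      rw [neg_lt, ← neg_div, div_lt_one hdpos]
      nlinarith [mul_nonneg (mul_pos hu0 (by linarith : (0:ℝ) < 1 - u)).le
        (mul_nonneg (by linarith : (0:ℝ) ≤ a + 3/2) (by linarith : (0:ℝ) ≤ -a)),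
        mul_nonneg hu0.le (mul_nonneg (by linarith : (0:ℝ) ≤ a + 3/2)
          (by linarith : (0:ℝ) ≤ 1/2 - a))]
  · rintro ⟨haa, haa'⟩
    have hd1 : (0:ℝ) < -(2*a + 1/3) := by linarith
    have hd2 : (0:ℝ) < 6*(1-a) := by linarith
    have hQ : (0:ℝ) ≤ -2*a^3 + 26/3*a^2 - 6 := by
      nlinarith [sq_nonneg (a + 5/4), sq_nonneg a,
        mul_nonneg (by linarith : (0:ℝ) ≤ -5/4 - a) (sq_nonneg a),
        mul_nonneg (by linarith : (0:ℝ) ≤ -5/4 - a) (by linarith : (0:ℝ) ≤ -a)]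
    have hν' : ν < -a^2*(3-a)/(6*(1-a)) := by
      rw [hν, hc₁, hc₂, div_lt_div_iff₀ hd1 hd2]
      nlinarith [mul_nonneg (by linarith : (0:ℝ) ≤ a + 3/2) hQ]
    linarith
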